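/- For real Y ≥ 1, Σ_{m≤Y} (1/m)(Y−m)² = Y² log Y + C₂Y² + Y + O(1), where C₂ = −11/12 − 2∫₁^∞ B₂(u)/u³ du and B₂(u) = (1/2)(u−⌊u⌋)² − (1/2)(u−⌊u⌋) + 1/12. -/

import Mathlib

open Finset MeasureTheory

/-- The periodic second Bernoulli polynomial. -/
noncomputable def B₂ (u : ℝ) : ℝ :=
  (1 / 2) * (u - ⌊u⌋) ^ 2 - (1 / 2) * (u - ⌊u⌋) + 1 / 12

/-- The constant `C₂ = -11/12 - 2∫₁^∞ B₂(u)/u³ du`. -/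
noncomputable def C₂ : ℝ := -11 / 12 - 2 * ∫ u in Set.Ioi (1 : ℝ), B₂ u / u ^ 3

lemma abs_B2_le (u : ℝ) : |B₂ u| ≤ 1 / 12 := by
  have h1 : (0:ℝ) ≤ u - ⌊u⌋ := by
    have := Int.floor_le u; linarith
  have h2 : u - ⌊u⌋ ≤ 1 := by
    have := Int.lt_floor_add_one u; linarith
  rw [abs_le, B₂]
  constructor <;> nlinarith [sq_nonneg (u - ⌊u⌋ - 1/2)]

lemma measurable_B2 : Measurable B₂ := by
  unfold B₂
  have h : Measurable (fun u : ℝ => (⌊u⌋:ℝ)) := by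
    have := (measurable_id.sub measurable_fract : Measurable (fun u : ℝ => u - Int.fract u))
    have e : (fun u : ℝ => u - Int.fract u) = fun u => (⌊u⌋:ℝ) :=
      funext fun u => Int.self_sub_fract u
    rw [← e]; exact this
  fun_prop

lemma rpow_neg3 {x : ℝ} (hx0 : 0 < x) : x ^ (-3:ℝ) = 1 / x ^ 3 := by
  rw [Real.rpow_neg hx0.le, show (3:ℝ) = ((3:ℕ):ℝ) by norm_num, Real.rpow_natCast]
  simp [one_div]

lemma integrableOn_inv_cube {a : ℝ} (ha : 0 < a) :
    IntegrableOn (fun u : ℝ => 1 / u ^ 3) (Set.Ioi a) volume := by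
  have h := integrableOn_Ioi_rpow_of_lt (a := -3) (by norm_num) ha
  apply h.congr_fun ?_ measurableSet_Ioi
  intro x hx
  show x ^ (-3:ℝ) = 1 / x ^ 3
  exact rpow_neg3 (lt_trans ha hx)

lemma integral_inv_cube {a : ℝ} (ha : 0 < a) :
    ∫ u in Set.Ioi a, 1 / u ^ 3 = 1 / (2 * a ^ 2) := by
  have h := integral_Ioi_rpow_of_lt (a := -3) (by norm_num) ha
  have heq : ∫ u in Set.Ioi a, 1 / u ^ 3 = ∫ t in Set.Ioi a, t ^ (-3 : ℝ) := by
    apply setIntegral_congr_fun measurableSet_Ioi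
    intro x hx
    show 1 / x ^ 3 = x ^ (-3:ℝ)
    exact (rpow_neg3 (lt_trans ha hx)).symm
  rw [heq, h]
  norm_num
  ring

lemma integrableOn_B2_div {a : ℝ} (ha : 0 < a) :
    IntegrableOn (fun u : ℝ => B₂ u / u ^ 3) (Set.Ioi a) volume := by
  apply Integrable.mono' ((integrableOn_inv_cube ha).const_mul (1/12))
  · exact ((measurable_B2.div (measurable_id.pow_const 3)).aestronglyMeasurable).restrict
  · filter_upwards [ae_restrict_mem measurableSet_Ioi] with x hx
    have hx0 : (0:ℝ) < x := lt_trans ha hx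
    rw [Real.norm_eq_abs, abs_div, div_le_iff₀ (by positivity : (0:ℝ) < |x ^ 3|)]
    have : |x ^ 3| = x ^ 3 := abs_of_pos (by positivity)
    rw [this]
    calc |B₂ x| ≤ 1/12 := abs_B2_le x
    _ = (1/12 * (1 / x^3)) * x^3 := by field_simp
    _ ≤ _ := le_refl _

lemma tail_bound {n : ℝ} (hn : 0 < n) :
    |∫ u in Set.Ioi n, B₂ u / u ^ 3| ≤ 1 / (24 * n ^ 2) := by
  have h1 : |∫ u in Set.Ioi n, B₂ u / u ^ 3| ≤ ∫ u in Set.Ioi n, (1/12) * (1 / u ^ 3) := by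
    rw [← Real.norm_eq_abs]
    apply norm_integral_le_of_norm_le ((integrableOn_inv_cube hn).const_mul (1/12))
    filter_upwards [ae_restrict_mem measurableSet_Ioi] with x hx
    have hx0 : (0:ℝ) < x := lt_trans hn hx
    rw [Real.norm_eq_abs, abs_div, abs_of_pos (by positivity : (0:ℝ) < x ^ 3)]
    rw [div_le_iff₀ (by positivity : (0:ℝ) < x ^ 3)]
    calc |B₂ x| ≤ 1/12 := abs_B2_le x
    _ = (1/12 * (1 / x^3)) * x^3 := by field_simp
    _ ≤ _ := le_refl _
  rw [integral_const_mul, integral_inv_cube hn] at h1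
  calc |∫ u in Set.Ioi n, B₂ u / u ^ 3| ≤ 1/12 * (1 / (2 * n^2)) := h1
  _ = 1 / (24 * n^2) := by ring

noncomputable def Fk (k : ℕ) (u : ℝ) : ℝ :=
  (1/2) * Real.log u + ((2*(k:ℝ)+1)/2) * u⁻¹ - (((k:ℝ)^2+(k:ℝ)+1/6)/4) * (u^2)⁻¹

lemma step_integral (k : ℕ) (hk : 1 ≤ k) :
    ∫ u in Set.Ioc (k:ℝ) ((k:ℝ)+1), B₂ u / u ^ 3 = Fk k ((k:ℝ)+1) - Fk k (k:ℝ) := by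
  have hk1 : (1:ℝ) ≤ (k:ℝ) := by exact_mod_cast hk
  have hkpos : (0:ℝ) < (k:ℝ) := by linarith
  set g : ℝ → ℝ := fun u => ((1/2)*(u-(k:ℝ))^2 - (1/2)*(u-(k:ℝ)) + 1/12)/u^3 with hg
  have hcong : ∫ u in Set.Ioc (k:ℝ) ((k:ℝ)+1), B₂ u / u ^ 3
      = ∫ u in Set.Ioc (k:ℝ) ((k:ℝ)+1), g u := by
    rw [integral_Ioc_eq_integral_Ioo, integral_Ioc_eq_integral_Ioo]
    apply setIntegral_congr_fun measurableSet_Ioo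
    intro x hx
    have hfloor : ⌊x⌋ = (k:ℤ) := by
      rw [Int.floor_eq_iff]
      constructor
      · push_cast; exact le_of_lt hx.1
      · push_cast; exact hx.2
    simp only [B₂, hg, hfloor]
    push_cast
    ring
  rw [hcong]
  have hle : (k:ℝ) ≤ (k:ℝ)+1 := by linarith
  rw [← intervalIntegral.integral_of_le hle]
  apply intervalIntegral.integral_eq_sub_of_hasDerivAt
  · intro u hu
    rw [Set.uIcc_of_le hle] at hu
    have hu0 : (0:ℝ) < u := lt_of_lt_of_le hkpos hu.1
    have hu0' : u ≠ 0 := ne_of_gt hu0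
    have hlog : HasDerivAt Real.log u⁻¹ u := Real.hasDerivAt_log hu0'
    have hinv : HasDerivAt (fun x:ℝ => x⁻¹) (-(u^2)⁻¹) u := by
      simpa using hasDerivAt_inv hu0'
    have hsq : HasDerivAt (fun x:ℝ => (x^2)⁻¹) (-(2*u)/((u^2)^2)) u := by
      have h1 : HasDerivAt (fun x:ℝ => x^2) (2*u) u := by
        simpa using hasDerivAt_pow 2 u
      have := h1.inv (by positivity)
      exact this
    have hF : HasDerivAt (Fk k)
        ((1/2) * u⁻¹ + ((2*(k:ℝ)+1)/2) * (-(u^2)⁻¹)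
          - (((k:ℝ)^2+(k:ℝ)+1/6)/4) * (-(2*u)/((u^2)^2))) u := by
      exact ((hlog.const_mul (1/2)).add (hinv.const_mul ((2*(k:ℝ)+1)/2))).sub
        (hsq.const_mul (((k:ℝ)^2+(k:ℝ)+1/6)/4))
    refine hF.congr_deriv ?_
    simp only [hg]
    field_simp
    ring
  · apply ContinuousOn.intervalIntegrable
    rw [Set.uIcc_of_le hle]
    apply ContinuousOn.div
    · fun_prop
    · fun_prop
    · intro x hx
      have : (0:ℝ) < x := lt_of_lt_of_le hkpos hx.1
      positivity

lemma harmonic_id (N : ℕ) (hN : 1 ≤ N) :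
    ∑ m ∈ Icc 1 N, (1:ℝ)/m
      = Real.log N + 7/12 + 1/(2*N) - 1/(12*(N:ℝ)^2)
        - 2 * ∫ u in Set.Ioc (1:ℝ) (N:ℝ), B₂ u / u ^ 3 := by
  induction N with
  | zero => omega
  | succ n ih =>
    rcases Nat.eq_or_lt_of_le hN with h1 | h1
    · simp [← h1]
      norm_num
    · have hn : 1 ≤ n := by omega
      have hnR : (1:ℝ) ≤ (n:ℝ) := by exact_mod_cast hn
      have hsplit : ∫ u in Set.Ioc (1:ℝ) ((n:ℝ)+1), B₂ u / u ^ 3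
          = (∫ u in Set.Ioc (1:ℝ) (n:ℝ), B₂ u / u ^ 3)
            + ∫ u in Set.Ioc (n:ℝ) ((n:ℝ)+1), B₂ u / u ^ 3 := by
        rw [← setIntegral_union]
        · rw [Set.Ioc_union_Ioc_eq_Ioc hnR (by linarith)]
        · exact Set.Ioc_disjoint_Ioc_of_le le_rfl
        · exact measurableSet_Ioc
        · exact (integrableOn_B2_div zero_lt_one).mono_set Set.Ioc_subset_Ioi_self
        · apply (integrableOn_B2_div zero_lt_one).mono_set
          intro x hx
          exact lt_of_le_of_lt hnR hx.1
      rw [Finset.sum_Icc_succ_top (by omega), ih hn]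
      push_cast
      rw [hsplit, step_integral n hn]
      have hlog : Real.log ((n:ℝ)+1) - Real.log (n:ℝ)
          = Real.log ((n:ℝ)+1) - Real.log (n:ℝ) := rfl
      simp only [Fk]
      have h0 : (n:ℝ) ≠ 0 := by positivity
      have h1' : (n:ℝ)+1 ≠ 0 := by positivity
      field_simp
      ring

lemma sum_cast_id (N : ℕ) : ∑ m ∈ Icc 1 N, (m:ℝ) = N*(N+1)/2 := by
  induction N with
  | zero => simp
  | succ n ih =>
    rw [Finset.sum_Icc_succ_top (by omega), ih]
    push_cast
    ring

lemma sum_ones (N : ℕ) : ∑ _m ∈ Icc 1 N, (1:ℝ) = N := by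
  simp

lemma log_est {n θ : ℝ} (hn : 1 ≤ n) (hθ0 : 0 ≤ θ) (hθ1 : θ < 1) :
    |(n+θ)^2 * (Real.log (n+θ) - Real.log n) - (n*θ + (3/2)*θ^2)| ≤ 5/2 := by
  have hn0 : (0:ℝ) < n := by linarith
  have hY0 : (0:ℝ) < n + θ := by linarith
  have hu : Real.log (n+θ) - Real.log n ≤ θ/n := by
    have h := Real.log_le_sub_one_of_pos (show (0:ℝ) < (n+θ)/n by positivity)
    rw [Real.log_div (by positivity) (by positivity)] at h
    have : (n+θ)/n - 1 = θ/n := by field_simp; ring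
    linarith
  have hl : θ/n - θ^2/n^2 ≤ Real.log (n+θ) - Real.log n := by
    have h := Real.log_le_sub_one_of_pos (show (0:ℝ) < n/(n+θ) by positivity)
    rw [Real.log_div (by positivity) (by positivity)] at h
    have h2 : n/(n+θ) - 1 = -(θ/(n+θ)) := by field_simp; ring
    have h3 : θ/n - θ^2/n^2 ≤ θ/(n+θ) := by
      have e : θ/(n+θ) - (θ/n - θ^2/n^2) = θ^3/(n^2*(n+θ)) := by field_simp; ring
      have hp : (0:ℝ) ≤ θ^3/(n^2*(n+θ)) := by positivity
      linarith
    linarith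
  have hsq : (0:ℝ) ≤ (n+θ)^2 := sq_nonneg _
  have hu' := mul_le_mul_of_nonneg_left hu hsq
  have hl' := mul_le_mul_of_nonneg_left hl hsq
  rw [abs_le]
  constructor
  · -- lower: -(5/2) ≤ ...
    have key : (n+θ)^2 * (θ/n - θ^2/n^2) - (n*θ + (3/2)*θ^2) ≥ -(5/2) := by
      have e : (n+θ)^2 * (θ/n - θ^2/n^2) - (n*θ + (3/2)*θ^2)
          = -(θ^2/2) - θ^3/n - θ^4/n^2 := by field_simp; ring
      rw [e]
      have b1 : θ^2 ≤ 1 := by nlinarith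
      have b2 : θ^3/n ≤ 1 := by
        rw [div_le_one hn0]; nlinarith
      have b3 : θ^4/n^2 ≤ 1 := by
        rw [div_le_one (by positivity)]; nlinarith
      linarith
    linarith
  · have key : (n+θ)^2 * (θ/n) - (n*θ + (3/2)*θ^2) ≤ 5/2 := by
      have e : (n+θ)^2 * (θ/n) - (n*θ + (3/2)*θ^2) = θ^2/2 + θ^3/n := by
        field_simp; ring
      rw [e]
      have b1 : θ^2 ≤ 1 := by nlinarith
      have b2 : θ^3/n ≤ 1 := by rw [div_le_one hn0]; nlinarith
      linarith
    linarith

set_option maxHeartbeats 1000000 in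
theorem cesaro_sum_asymptotic :
    ∃ C : ℝ, 0 < C ∧ ∀ Y : ℝ, 1 ≤ Y →
      |(∑ m ∈ Finset.Icc 1 ⌊Y⌋₊, (1 / (m : ℝ)) * (Y - m) ^ 2) -
        (Y ^ 2 * Real.log Y + C₂ * Y ^ 2 + Y)| ≤ C := by
  refine ⟨4, by norm_num, fun Y hY => ?_⟩
  set N := ⌊Y⌋₊ with hNdef
  have hY0 : (0:ℝ) ≤ Y := by linarith
  have hN1 : 1 ≤ N := Nat.le_floor (by exact_mod_cast hY)
  set n : ℝ := (N:ℝ) with hndef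
  have hn1 : (1:ℝ) ≤ n := by rw [hndef]; exact_mod_cast hN1
  have hn0 : (0:ℝ) < n := by linarith
  have hfl : n ≤ Y := Nat.floor_le hY0
  have hfu : Y < n + 1 := Nat.lt_floor_add_one Y
  set θ : ℝ := Y - n with hθdef
  have hθ0 : 0 ≤ θ := by rw [hθdef]; linarith
  have hθ1 : θ < 1 := by rw [hθdef]; linarith
  -- sum expansion
  set H : ℝ := ∑ m ∈ Icc 1 N, (1:ℝ)/m with hHdef
  have hS : (∑ m ∈ Finset.Icc 1 N, (1 / (m : ℝ)) * (Y - m) ^ 2)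
      = Y^2 * H - 2*Y*n + n*(n+1)/2 := by
    have expand : (∑ m ∈ Finset.Icc 1 N, (1 / (m : ℝ)) * (Y - m) ^ 2)
        = ∑ m ∈ Finset.Icc 1 N, (Y^2 * (1/(m:ℝ)) - 2*Y*1 + (m:ℝ)) := by
      apply Finset.sum_congr rfl
      intro m hm
      have hm1 : 1 ≤ m := (Finset.mem_Icc.mp hm).1
      have hm0 : (m:ℝ) ≠ 0 := by positivity
      field_simp
      ring
    rw [expand, Finset.sum_add_distrib, Finset.sum_sub_distrib, ← Finset.mul_sum,
      ← Finset.mul_sum, sum_cast_id, sum_ones]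
  have hH : H = Real.log n + 7/12 + 1/(2*n) - 1/(12*n^2)
      - 2 * ∫ u in Set.Ioc (1:ℝ) n, B₂ u / u ^ 3 := harmonic_id N hN1
  set J : ℝ := ∫ u in Set.Ioc (1:ℝ) n, B₂ u / u ^ 3 with hJdef
  set T : ℝ := ∫ u in Set.Ioi n, B₂ u / u ^ 3 with hTdef
  have hI : (∫ u in Set.Ioi (1:ℝ), B₂ u / u ^ 3) = J + T := by
    rw [hJdef, hTdef, ← setIntegral_union]
    · rw [Set.Ioc_union_Ioi_eq_Ioi hn1]
    · exact Set.Ioc_disjoint_Ioi le_rfl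
    · exact measurableSet_Ioi
    · exact (integrableOn_B2_div zero_lt_one).mono_set Set.Ioc_subset_Ioi_self
    · exact (integrableOn_B2_div zero_lt_one).mono_set (Set.Ioi_subset_Ioi hn1)
  have hC₂ : C₂ = -11/12 - 2*(J + T) := by rw [C₂, hI]
  -- main difference identity
  have hD : (∑ m ∈ Finset.Icc 1 N, (1 / (m : ℝ)) * (Y - m) ^ 2)
      - (Y ^ 2 * Real.log Y + C₂ * Y ^ 2 + Y)
      = -(Y^2 * (Real.log Y - Real.log n) - (n*θ + (3/2)*θ^2))
        + θ^2/(2*n) - Y^2/(12*n^2) + 2*Y^2*T := by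
    rw [hS, hH, hC₂, hθdef]
    field_simp
    ring
  rw [hD]
  have hA : |(-(Y^2 * (Real.log Y - Real.log n) - (n*θ + (3/2)*θ^2)))| ≤ 5/2 := by
    rw [abs_neg]
    have : Y = n + θ := by rw [hθdef]; ring
    rw [this]
    exact log_est hn1 hθ0 hθ1
  have hB1 : |θ^2/(2*n)| ≤ 1/2 := by
    rw [abs_div, abs_of_pos (by positivity : (0:ℝ) < 2*n), div_le_iff₀ (by positivity)]
    have : |θ^2| = θ^2 := abs_of_nonneg (sq_nonneg θ)
    rw [this]
    nlinarith
  have hY2n : Y^2 ≤ 4*n^2 := by nlinarith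
  have hB2 : |Y^2/(12*n^2)| ≤ 1/3 := by
    rw [abs_div, abs_of_pos (by positivity : (0:ℝ) < 12*n^2), div_le_iff₀ (by positivity)]
    rw [abs_of_nonneg (sq_nonneg Y)]
    nlinarith
  have hB3 : |2*Y^2*T| ≤ 1/3 := by
    have hT := tail_bound hn0
    rw [← hTdef] at hT
    have : |2*Y^2*T| = 2*Y^2*|T| := by
      rw [abs_mul, abs_of_nonneg (by positivity : (0:ℝ) ≤ 2*Y^2)]
    rw [this]
    calc 2*Y^2*|T| ≤ 2*(4*n^2)*(1/(24*n^2)) := by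
          apply mul_le_mul (by nlinarith) hT (abs_nonneg T) (by positivity)
    _ = 1/3 := by field_simp; ring
  set A := -(Y^2 * (Real.log Y - Real.log n) - (n*θ + (3/2)*θ^2)) with hAdef
  have key : |A + θ^2/(2*n) - Y^2/(12*n^2) + 2*Y^2*T|
      ≤ |A| + |θ^2/(2*n)| + |Y^2/(12*n^2)| + |2*Y^2*T| := by
    have e : A + θ^2/(2*n) - Y^2/(12*n^2) + 2*Y^2*T
        = (A + θ^2/(2*n) + -(Y^2/(12*n^2))) + 2*Y^2*T := by ring
    rw [e]
    have t1 := abs_add_le (A + θ^2/(2*n) + -(Y^2/(12*n^2))) (2*Y^2*T)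
    have t2 := abs_add_le (A + θ^2/(2*n)) (-(Y^2/(12*n^2)))
    have t3 := abs_add_le A (θ^2/(2*n))
    rw [abs_neg] at t2
    linarith
  linarith [key, hA, hB1, hB2, hB3]
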